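/- Let q, n, t be positive integers with n ≤ q. Then there exist a prime p with q < p ≤ 2q and a ∈ (ℤ/pℤ)^t such that the VT-syndrome code satisfies |C(q, n, p, t, a)| ≥ binom(q, n) / (2q)^t. -/

import Mathlib

/-- Hamming weight of a binary vector `x ∈ {0,1}^q`. -/
def wt {q : ℕ} (x : Fin q → Bool) : ℕ :=
  (Finset.univ.filter fun i => x i = true).card

/-- The VT-syndrome vector of `x ∈ {0,1}^q` (coordinates indexed by `1, …, q`):
its `k`-th entry is `∑_{i=1}^q i^k x_i mod p`, for `k = 1, …, t`. -/
def vts (q p t : ℕ) (x : Fin q → Bool) : Fin t → ZMod p :=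
  fun k => ∑ i : Fin q, (if x i then ((((i : ℕ) + 1 : ℕ) : ZMod p) ^ ((k : ℕ) + 1)) else 0)

/-- The VT-syndrome code `C(q, n, p, t, a)`. -/
def VTCode (q n p t : ℕ) (a : Fin t → ZMod p) : Set (Fin q → Bool) :=
  {x | wt x = n ∧ vts q p t x = a}

/-- The support of a binary vector. -/
def supp {q : ℕ} (x : Fin q → Bool) : Finset (Fin q) :=
  Finset.univ.filter fun i => x i = true

/-- A set `B` of binary vectors of weight `n` corrects `t` asymmetric errors if there is no
vector of weight `n - t` lying componentwise below two distinct elements of `B`. -/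
def CorrectsAsym (q n t : ℕ) (B : Set (Fin q → Bool)) : Prop :=
  ∀ x ∈ B, ∀ y ∈ B, ∀ z : Fin q → Bool, wt z = n - t → z ≤ x → z ≤ y → x = y

/-- For positive q, n, t with n ≤ q, there exist a prime p with
q < p ≤ 2q and a ∈ (ℤ/pℤ)^t such that |C(q, n, p, t, a)| ≥ binom(q, n) / (2q)^t. -/
theorem stmt_10 (q n t : ℕ) (hq : 0 < q) (hn : 0 < n) (ht : 0 < t) (hnq : n ≤ q) :
    ∃ p : ℕ, p.Prime ∧ q < p ∧ p ≤ 2 * q ∧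
      ∃ a : Fin t → ZMod p,
        ((q.choose n : ℝ) / ((2 * q : ℕ) : ℝ) ^ t) ≤ (Nat.card (VTCode q n p t a) : ℝ) := by
  obtain ⟨p, hp, hqp, hp2q⟩ := Nat.exists_prime_lt_and_le_two_mul q hq.ne'
  haveI : NeZero p := ⟨hp.pos.ne'⟩
  refine ⟨p, hp, hqp, hp2q, ?_⟩
  set S : Finset (Fin q → Bool) := Finset.univ.filter (fun x => wt x = n) with hS
  have hScard : S.card = q.choose n := by
    rw [show q.choose n = (Finset.powersetCard n (Finset.univ : Finset (Fin q))).card by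
      simp [Finset.card_powersetCard]]
    refine Finset.card_nbij' (fun x => supp x) (fun s i => decide (i ∈ s)) ?_ ?_ ?_ ?_
    · intro x hx
      simp only [Finset.mem_coe, hS, Finset.mem_filter, Finset.mem_univ, true_and] at hx
      simp [Finset.mem_powersetCard, supp, ← hx, wt]
    · intro s hs
      simp only [Finset.mem_coe, Finset.mem_powersetCard] at hs
      show (fun i => decide (i ∈ s)) ∈ S
      simp only [Finset.mem_coe, hS, Finset.mem_filter, Finset.mem_univ, true_and]
      simp only [wt]
      rw [← hs.2]
      congr 1
      ext i
      simp
    · intro x hx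
      funext i
      simp [supp]
    · intro s hs
      ext i
      simp [supp]
  have hfib : S.card = ∑ a : Fin t → ZMod p, (S.filter (fun x => vts q p t x = a)).card :=
    Finset.card_eq_sum_card_fiberwise (fun x _ => Finset.mem_univ _)
  have hcardfun : Fintype.card (Fin t → ZMod p) = p ^ t := by
    simp [ZMod.card]
  obtain ⟨a, -, ha⟩ : ∃ a ∈ (Finset.univ : Finset (Fin t → ZMod p)),
      S.card ≤ (S.filter (fun x => vts q p t x = a)).card * p ^ t := by
    apply Finset.exists_le_of_sum_le Finset.univ_nonempty
    rw [← Finset.sum_mul, ← hfib, Finset.sum_const, Finset.card_univ, hcardfun,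
      smul_eq_mul, mul_comm]
  refine ⟨a, ?_⟩
  have hset : VTCode q n p t a = ↑(S.filter (fun x => vts q p t x = a)) := by
    ext x
    simp [VTCode, hS, Finset.mem_filter, and_assoc]
  rw [hset, Nat.card_coe_set_eq, Set.ncard_coe_finset]
  have h2q : (0:ℝ) < ((2 * q : ℕ) : ℝ) ^ t := by positivity
  rw [div_le_iff₀ h2q]
  calc (q.choose n : ℝ) ≤ ((S.filter (fun x => vts q p t x = a)).card * p ^ t : ℕ) := by
        exact_mod_cast hScard ▸ ha
    _ ≤ ((S.filter (fun x => vts q p t x = a)).card : ℝ) * ((2 * q : ℕ) : ℝ) ^ t := by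
        push_cast
        gcongr
        exact_mod_cast hp2q
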